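/- Let s^β(τ) := ∫₀^∞ (4π β^u τ^{u−1} / Γ(u)) du for τ > 0 and β > 0, and suppose s^β(τ) ≤ C(β,T)/((τ ∧ e^{−2}) (log(τ ∧ e^{−2}))²) for 0 < τ ≤ T. Then for all T' ∈ (0,T] and a ∈ (0,1): ∫₀^{T'} s^β(t)/(T' − t)^a dt ≤ C(β,T,a) / ((T'/2)^a · log((T'/2) ∧ e^{−2})^{−1}). -/

import Mathlib

open MeasureTheory

open Set Filter in
private lemma sq_log_pos' {t : ℝ} (h0 : 0 < t) (h1 : t < 1) : 0 < t * Real.log t ^ 2 := by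
  have hlog : Real.log t < 0 := Real.log_neg h0 h1
  have : 0 < Real.log t ^ 2 := by nlinarith
  exact mul_pos h0 this

open Set Filter in
private lemma contOn_key' {s : Set ℝ} (hs : s ⊆ Set.Ioo 0 1) :
    ContinuousOn (fun t : ℝ => (t * Real.log t ^ 2)⁻¹) s := by
  apply ContinuousOn.inv₀
  · exact continuousOn_id.mul ((Real.continuousOn_log.mono (fun t ht => by
      have := hs ht; exact ne_of_gt this.1)).pow 2)
  · intro t ht
    exact (sq_log_pos' (hs ht).1 (hs ht).2).ne'

open Set Filter in
private lemma intervalInt_key' {ε x : ℝ} (hε : 0 < ε) (hεx : ε ≤ x) (hx : x < 1) :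
    ∫ t in Set.Ioc ε x, (t * Real.log t ^ 2)⁻¹ = -(Real.log x)⁻¹ + (Real.log ε)⁻¹ := by
  have hsub : Set.uIcc ε x ⊆ Set.Ioo 0 1 := by
    rw [Set.uIcc_of_le hεx]
    intro t ht
    exact ⟨lt_of_lt_of_le hε ht.1, lt_of_le_of_lt ht.2 hx⟩
  have hint : IntervalIntegrable (fun t : ℝ => (t * Real.log t ^ 2)⁻¹) volume ε x :=
    (contOn_key' hsub).intervalIntegrable
  have hderiv : ∀ t ∈ Set.uIcc ε x,
      HasDerivAt (fun t : ℝ => -(Real.log t)⁻¹) ((t * Real.log t ^ 2)⁻¹) t := by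
    intro t ht
    have h := hsub ht
    have hlog : Real.log t < 0 := Real.log_neg h.1 h.2
    have h1 : HasDerivAt (fun t : ℝ => (Real.log t)⁻¹) (-(t⁻¹) / Real.log t ^ 2) t :=
      (Real.hasDerivAt_log h.1.ne').inv (ne_of_lt hlog)
    have := h1.neg
    refine HasDerivAt.congr_deriv this ?_
    simp only [neg_div, neg_neg, div_eq_mul_inv, mul_inv, neg_mul]
  have := intervalIntegral.integral_eq_sub_of_hasDerivAt hderiv hint
  rw [intervalIntegral.integral_of_le hεx] at this
  rw [this]; ring

open Set Filter in
private lemma intKey' {x : ℝ} (hx0 : 0 < x) (hx1 : x ≤ Real.exp (-2)) :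
    IntegrableOn (fun t : ℝ => (t * Real.log t ^ 2)⁻¹) (Set.Ioc 0 x) ∧
      ∫ t in Set.Ioc 0 x, (t * Real.log t ^ 2)⁻¹ ≤ -(Real.log x)⁻¹ := by
  have hx2 : x < 1 := lt_of_le_of_lt hx1 (by
    rw [show (1:ℝ) = Real.exp 0 by simp]; exact Real.exp_lt_exp.mpr (by norm_num))
  set f : ℝ → ℝ := fun t => (t * Real.log t ^ 2)⁻¹ with hf
  set a : ℕ → ℝ := fun n => x / (n + 2) with hA
  have ha_pos : ∀ n, 0 < a n := fun n => div_pos hx0 (by positivity)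
  have ha_le : ∀ n, a n ≤ x := fun n => by
    rw [hA]; rw [div_le_iff₀ (by positivity)]
    nlinarith [hx0]
  have ha_tendsto : Tendsto a atTop (nhds 0) := by
    apply Tendsto.div_atTop tendsto_const_nhds
    exact tendsto_atTop_add_const_right _ 2 tendsto_natCast_atTop_atTop
  have hIoc_int : ∀ n, IntegrableOn f (Set.Ioc (a n) x) := by
    intro n
    refine ((contOn_key' ?_).integrableOn_Icc).mono_set Set.Ioc_subset_Icc_self
    intro t ht
    exact ⟨lt_of_lt_of_le (ha_pos n) ht.1, lt_of_le_of_lt ht.2 hx2⟩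
  have hbound : ∀ n, ∫ t in Set.Ioc (a n) x, ‖f t‖ ≤ -(Real.log x)⁻¹ := by
    intro n
    have heq : ∀ t ∈ Set.Ioc (a n) x, ‖f t‖ = f t := by
      intro t ht
      exact Real.norm_of_nonneg (le_of_lt (by
        exact inv_pos.mpr (sq_log_pos' (lt_of_lt_of_le (ha_pos n) ht.1.le)
          (lt_of_le_of_lt ht.2 hx2))))
    rw [setIntegral_congr_fun measurableSet_Ioc heq,
      intervalInt_key' (ha_pos n) (ha_le n) hx2]
    have : (Real.log (a n))⁻¹ ≤ 0 := by
      apply inv_nonpos.mpr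
      exact (Real.log_neg (ha_pos n) (lt_of_le_of_lt (ha_le n) hx2)).le
    linarith
  have hInt : IntegrableOn f (Set.Ioc 0 x) :=
    integrableOn_Ioc_of_intervalIntegral_norm_bounded_left hIoc_int ha_tendsto
      (Filter.Eventually.of_forall hbound)
  refine ⟨hInt, ?_⟩
  have hcover : AECover (volume.restrict (Set.Ioc 0 x)) atTop (fun n => Set.Ioc (a n) x) :=
    aecover_Ioc_of_Ioc ha_tendsto tendsto_const_nhds
  have htend := hcover.integral_tendsto_of_countably_generated (hInt)
  refine le_of_tendsto htend (Filter.Eventually.of_forall fun n => ?_)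
  have hres : ∫ t in Set.Ioc (a n) x, f t ∂(volume.restrict (Set.Ioc 0 x))
      = ∫ t in Set.Ioc (a n) x, f t := by
    rw [Measure.restrict_restrict measurableSet_Ioc]
    congr 1
    rw [Set.Ioc_inter_Ioc, max_eq_left (ha_pos n).le, min_self]
  rw [hres, intervalInt_key' (ha_pos n) (ha_le n) hx2]
  have : (Real.log (a n))⁻¹ ≤ 0 :=
    inv_nonpos.mpr (Real.log_neg (ha_pos n) (lt_of_le_of_lt (ha_le n) hx2)).le
  linarith

open Set Filter in
private lemma psi_deriv' {t : ℝ} (ht0 : 0 < t) :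
    HasDerivAt (fun t : ℝ => t * Real.log t ^ 2)
      (1 * Real.log t ^ 2 + t * (2 * Real.log t ^ 1 * t⁻¹)) t :=
  (hasDerivAt_id t).mul ((Real.hasDerivAt_log ht0.ne').pow 2)

open Set Filter in
private lemma psi_mono' :
    MonotoneOn (fun t : ℝ => t * Real.log t ^ 2) (Set.Ioc 0 (Real.exp (-2))) := by
  have hconv : Convex ℝ (Set.Ioc (0:ℝ) (Real.exp (-2))) := convex_Ioc _ _
  apply monotoneOn_of_deriv_nonneg hconv
  · exact continuousOn_id.mul ((Real.continuousOn_log.mono (fun t ht => ne_of_gt ht.1)).pow 2)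
  · intro t ht
    rw [interior_Ioc] at ht
    exact (psi_deriv' ht.1).differentiableAt.differentiableWithinAt
  · intro t ht
    rw [interior_Ioc] at ht
    have ht0 : 0 < t := ht.1
    rw [(psi_deriv' ht0).deriv]
    have hlog : Real.log t ≤ -2 := by
      calc Real.log t ≤ Real.log (Real.exp (-2)) := Real.log_le_log ht0 ht.2.le
      _ = -2 := Real.log_exp _
    have h2 : t * (2 * Real.log t ^ 1 * t⁻¹) = 2 * Real.log t := by
      field_simp
    rw [h2]
    nlinarith

/-- `s^β(τ) = ∫₀^∞ 4π β^u τ^{u−1}/Γ(u) du`. -/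
noncomputable def sBeta (β τ : ℝ) : ℝ :=
  ∫ u in Set.Ioi (0:ℝ), 4 * Real.pi * β ^ u * τ ^ (u - 1) / Real.Gamma u

private lemma sBeta_nonneg' {β τ : ℝ} (hβ : 0 < β) (hτ : 0 < τ) : 0 ≤ sBeta β τ := by
  apply setIntegral_nonneg measurableSet_Ioi
  intro u hu
  have h1 : 0 < Real.Gamma u := Real.Gamma_pos_of_pos hu
  have h2 : (0:ℝ) < β ^ u := Real.rpow_pos_of_pos hβ u
  have h3 : (0:ℝ) < τ ^ (u-1) := Real.rpow_pos_of_pos hτ _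
  positivity

set_option maxHeartbeats 1000000 in
/-- Assuming the known bound `s^β(τ) ≤ C₁/((τ ∧ e⁻²)(log(τ ∧ e⁻²))²)` on `(0,T]`,
for all `T' ∈ (0,T]` and `a ∈ (0,1)`:
`∫₀^{T'} s^β(t)/(T'−t)^a dt ≤ C/((T'/2)^a · log((T'/2 ∧ e⁻²)⁻¹))`. -/
theorem stmt_17 (β T a : ℝ) (hβ : 0 < β) (hT : 0 < T) (ha : a ∈ Set.Ioo (0:ℝ) 1)
    (C₁ : ℝ)
    (hs : ∀ τ ∈ Set.Ioc (0:ℝ) T,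
      sBeta β τ ≤ C₁ / (min τ (Real.exp (-2)) * (Real.log (min τ (Real.exp (-2)))) ^ 2)) :
    ∃ C : ℝ, 0 < C ∧ ∀ T' ∈ Set.Ioc (0:ℝ) T,
      (∫ τ in Set.Ioo (0:ℝ) T', sBeta β τ / (T' - τ) ^ a)
        ≤ C / ((T' / 2) ^ a * Real.log ((min (T' / 2) (Real.exp (-2)))⁻¹)) := by
  obtain ⟨ha0, ha1⟩ := ha
  set e2 : ℝ := Real.exp (-2) with he2
  have he2pos : 0 < e2 := Real.exp_pos _
  have he2lt1 : e2 < 1 := by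
    rw [he2, show (1:ℝ) = Real.exp 0 by simp]
    exact Real.exp_lt_exp.mpr (by norm_num)
  have hloge2 : Real.log e2 = -2 := Real.log_exp _
  set C₂ : ℝ := max C₁ 0 with hC₂
  have hC₂0 : 0 ≤ C₂ := le_max_right _ _
  set K₂ : ℝ := (e2 * 4)⁻¹ * (T / 2) with hK₂
  have hK₂0 : 0 ≤ K₂ := by positivity
  set Cmain : ℝ := C₂ * (1 + 2 * K₂) + C₂ * (1 + T / 2 * Real.exp 2) / (1 - a) with hCmain
  have hCmain0 : 0 ≤ Cmain := by
    have h9 : 0 ≤ C₂ * (1 + T / 2 * Real.exp 2) / (1 - a) := by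
      apply div_nonneg _ (by linarith)
      positivity
    have h10 : 0 ≤ C₂ * (1 + 2 * K₂) := mul_nonneg hC₂0 (by linarith)
    rw [hCmain]; exact add_nonneg h10 h9
  refine ⟨max Cmain 1, lt_of_lt_of_le one_pos (le_max_right _ _), ?_⟩
  intro T' hT'
  obtain ⟨hT'0, hT'T⟩ := hT'
  set m : ℝ := min (T' / 2) e2 with hm
  have hm0 : 0 < m := lt_min (by linarith) he2pos
  have hmle : m ≤ e2 := min_le_right _ _
  have hmlt1 : m < 1 := lt_of_le_of_lt hmle he2lt1
  have hlogm : Real.log m ≤ -2 := by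
    calc Real.log m ≤ Real.log e2 := Real.log_le_log hm0 hmle
    _ = -2 := hloge2
  set L : ℝ := Real.log m⁻¹ with hL
  have hLeq : L = -Real.log m := by rw [hL, Real.log_inv]
  have hL2 : 2 ≤ L := by rw [hLeq]; linarith
  have hL0 : 0 < L := by linarith
  have hX0 : (0:ℝ) < (T' / 2) ^ (-a) := Real.rpow_pos_of_pos (by linarith) _
  have hXa0 : (0:ℝ) < (T' / 2) ^ a := Real.rpow_pos_of_pos (by linarith) _
  -- the pointwise bound function
  set bnd : ℝ → ℝ := fun τ => (min τ e2 * Real.log (min τ e2) ^ 2)⁻¹ with hbnd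
  have hbnd_pos : ∀ τ : ℝ, 0 < τ → 0 < min τ e2 * Real.log (min τ e2) ^ 2 := by
    intro τ hτ
    exact sq_log_pos' (lt_min hτ he2pos) (lt_of_le_of_lt (min_le_right _ _) he2lt1)
  have hsB : ∀ τ ∈ Set.Ioc (0:ℝ) T, sBeta β τ ≤ C₂ * bnd τ := by
    intro τ hτ
    have h1 := hs τ hτ
    have h2 : C₁ / (min τ e2 * Real.log (min τ e2) ^ 2) ≤ C₂ * bnd τ := by
      rw [div_eq_mul_inv]
      exact mul_le_mul_of_nonneg_right (le_max_left _ _) (inv_nonneg.mpr (hbnd_pos τ hτ.1).le)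
    exact le_trans h1 h2
  -- the dominating function
  set g : ℝ → ℝ := fun τ => if τ ≤ T' / 2 then (T' / 2) ^ (-a) * (C₂ * bnd τ)
    else (C₂ * (m * L ^ 2)⁻¹) * (T' - τ) ^ (-a) with hg
  have hmL : m * L ^ 2 = m * Real.log m ^ 2 := by rw [hLeq]; ring
  have hmL0 : 0 < m * L ^ 2 := by positivity
  -- pointwise: sBeta τ / (T'-τ)^a ≤ g τ on Ioo 0 T'
  have hpt : ∀ τ ∈ Set.Ioo (0:ℝ) T', sBeta β τ / (T' - τ) ^ a ≤ g τ := by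
    intro τ hτ
    obtain ⟨hτ0, hτT'⟩ := hτ
    have hτT : τ ∈ Set.Ioc (0:ℝ) T := ⟨hτ0, by linarith⟩
    have hsb := hsB τ hτT
    have hsb0 := sBeta_nonneg' hβ hτ0
    have hTτ0 : 0 < T' - τ := by linarith
    by_cases hcase : τ ≤ T' / 2
    · rw [show g τ = (T' / 2) ^ (-a) * (C₂ * bnd τ) from if_pos hcase]
      have hhalf : T' / 2 ≤ T' - τ := by linarith
      have hrle : (T' / 2) ^ a ≤ (T' - τ) ^ a :=
        Real.rpow_le_rpow (by linarith) hhalf ha0.le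
      have hb0 : 0 ≤ C₂ * bnd τ := mul_nonneg hC₂0 (inv_nonneg.mpr (hbnd_pos τ hτ0).le)
      calc sBeta β τ / (T' - τ) ^ a ≤ (C₂ * bnd τ) / (T' / 2) ^ a :=
            div_le_div₀ hb0 hsb (by positivity) hrle
      _ = (T' / 2) ^ (-a) * (C₂ * bnd τ) := by
            rw [Real.rpow_neg (by linarith : (0:ℝ) ≤ T' / 2)]
            ring
    · rw [show g τ = (C₂ * (m * L ^ 2)⁻¹) * (T' - τ) ^ (-a) from if_neg hcase]
      push_neg at hcase
      have hmem1 : m ∈ Set.Ioc (0:ℝ) e2 := ⟨hm0, hmle⟩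
      have hmem2 : min τ e2 ∈ Set.Ioc (0:ℝ) e2 := ⟨lt_min hτ0 he2pos, min_le_right _ _⟩
      have hmmin : m ≤ min τ e2 := min_le_min (by linarith) le_rfl
      have hψ := psi_mono' hmem1 hmem2 hmmin
      have hbnd_le : bnd τ ≤ (m * L ^ 2)⁻¹ := by
        rw [hmL, hbnd]
        exact inv_anti₀ (by rw [← hmL]; exact hmL0) hψ
      have hsb2 : sBeta β τ ≤ C₂ * (m * L ^ 2)⁻¹ := le_trans hsb
        (mul_le_mul_of_nonneg_left hbnd_le hC₂0)
      rw [div_eq_mul_inv, ← Real.rpow_neg hTτ0.le]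
      exact mul_le_mul_of_nonneg_right hsb2 (Real.rpow_pos_of_pos hTτ0 _).le
  -- integrability of bnd on Ioc 0 (T'/2), and its integral bound
  have hmain1 : IntegrableOn bnd (Set.Ioc 0 (T' / 2)) ∧
      ∫ τ in Set.Ioc 0 (T' / 2), bnd τ ≤ (1 + 2 * K₂) / L := by
    rcases le_or_gt (T' / 2) e2 with hcase | hcase
    · -- T'/2 ≤ e2, m = T'/2
      have hmeq : m = T' / 2 := min_eq_left hcase
      have hcongr : ∀ τ ∈ Set.Ioc (0:ℝ) (T' / 2), bnd τ = (τ * Real.log τ ^ 2)⁻¹ := by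
        intro τ hτ
        simp only [hbnd, min_eq_left (hτ.2.trans hcase)]
      obtain ⟨hint, hval⟩ := intKey' (show (0:ℝ) < T' / 2 by linarith) hcase
      constructor
      · exact (integrableOn_congr_fun hcongr measurableSet_Ioc).mpr hint
      · rw [setIntegral_congr_fun measurableSet_Ioc hcongr]
        refine le_trans hval ?_
        have hLval : L = -Real.log (T' / 2) := by rw [hLeq, hmeq]
        rw [show -(Real.log (T' / 2))⁻¹ = L⁻¹ by rw [hLval, inv_neg]]
        rw [div_eq_mul_inv]
        nlinarith [inv_pos.mpr hL0]
    · -- e2 < T'/2, m = e2, L = 2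
      have hmeq : m = e2 := min_eq_right hcase.le
      have hLval : L = 2 := by rw [hLeq, hmeq, hloge2]; norm_num
      have hsplit : Set.Ioc (0:ℝ) (T' / 2) = Set.Ioc 0 e2 ∪ Set.Ioc e2 (T' / 2) :=
        (Set.Ioc_union_Ioc_eq_Ioc he2pos.le hcase.le).symm
      have hcongr1 : ∀ τ ∈ Set.Ioc (0:ℝ) e2, bnd τ = (τ * Real.log τ ^ 2)⁻¹ := by
        intro τ hτ
        simp only [hbnd, min_eq_left hτ.2]
      have hcongr2 : ∀ τ ∈ Set.Ioc e2 (T' / 2), bnd τ = (e2 * 4)⁻¹ := by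
        intro τ hτ
        simp only [hbnd, min_eq_right hτ.1.le, hloge2]
        norm_num
      obtain ⟨hint1, hval1⟩ := intKey' he2pos le_rfl
      have hint1' : IntegrableOn bnd (Set.Ioc 0 e2) :=
        (integrableOn_congr_fun hcongr1 measurableSet_Ioc).mpr hint1
      have hint2' : IntegrableOn bnd (Set.Ioc e2 (T' / 2)) := by
        refine (integrableOn_congr_fun hcongr2 measurableSet_Ioc).mpr ?_
        exact integrableOn_const measure_Ioc_lt_top.ne
      have hdisj : Disjoint (Set.Ioc (0:ℝ) e2) (Set.Ioc e2 (T' / 2)) :=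
        Set.disjoint_left.mpr fun x hx hx' => absurd hx'.1 (not_lt.mpr hx.2)
      constructor
      · rw [hsplit]; exact hint1'.union hint2'
      · rw [hsplit, setIntegral_union hdisj measurableSet_Ioc hint1' hint2']
        have hv1 : ∫ τ in Set.Ioc (0:ℝ) e2, bnd τ ≤ 2⁻¹ := by
          rw [setIntegral_congr_fun measurableSet_Ioc hcongr1]
          refine le_trans hval1 ?_
          rw [hloge2]; norm_num
        have hv2 : ∫ τ in Set.Ioc e2 (T' / 2), bnd τ ≤ K₂ := by
          rw [setIntegral_congr_fun measurableSet_Ioc hcongr2]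
          rw [setIntegral_const, measureReal_def, Real.volume_Ioc, smul_eq_mul]
          rw [ENNReal.toReal_ofReal (by linarith)]
          rw [hK₂]
          have : T' / 2 - e2 ≤ T / 2 := by linarith
          nlinarith [inv_pos.mpr (show (0:ℝ) < e2 * 4 by linarith)]
        rw [hLval]
        linarith
    -- end cases
  obtain ⟨hbnd_int, hbnd_val⟩ := hmain1
  -- integrability of g
  have hsplitT : Set.Ioo (0:ℝ) T' = Set.Ioc 0 (T' / 2) ∪ Set.Ioo (T' / 2) T' :=
    (Set.Ioc_union_Ioo_eq_Ioo (by linarith) (by linarith)).symm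
  have hgcongr1 : ∀ τ ∈ Set.Ioc (0:ℝ) (T' / 2), g τ = (T' / 2) ^ (-a) * (C₂ * bnd τ) := by
    intro τ hτ; rw [hg]; exact if_pos hτ.2
  have hgcongr2 : ∀ τ ∈ Set.Ioo (T' / 2) T', g τ = (C₂ * (m * L ^ 2)⁻¹) * (T' - τ) ^ (-a) := by
    intro τ hτ; rw [hg]; exact if_neg (not_le.mpr hτ.1)
  have hrint : IntegrableOn (fun τ : ℝ => (T' - τ) ^ (-a)) (Set.Ioo (T' / 2) T') := by
    have h1 : IntervalIntegrable (fun x : ℝ => x ^ (-a)) volume 0 (T' / 2) :=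
      intervalIntegral.intervalIntegrable_rpow' (by linarith)
    have h2 := (h1.comp_sub_left T').symm
    simp only [sub_zero] at h2
    have h3 : T' - T' / 2 = T' / 2 := by ring
    rw [h3] at h2
    exact ((intervalIntegrable_iff_integrableOn_Ioc_of_le (by linarith)).mp h2).mono_set
      Set.Ioo_subset_Ioc_self
  have hgint1 : IntegrableOn g (Set.Ioc 0 (T' / 2)) :=
    (integrableOn_congr_fun hgcongr1 measurableSet_Ioc).mpr
      ((hbnd_int.const_mul C₂).const_mul ((T' / 2) ^ (-a)))
  have hgint2 : IntegrableOn g (Set.Ioo (T' / 2) T') :=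
    (integrableOn_congr_fun hgcongr2 measurableSet_Ioo).mpr
      (hrint.const_mul (C₂ * (m * L ^ 2)⁻¹))
  have hgint : IntegrableOn g (Set.Ioo 0 T') := by
    rw [hsplitT]; exact hgint1.union hgint2
  -- main comparison
  have hcomp : (∫ τ in Set.Ioo (0:ℝ) T', sBeta β τ / (T' - τ) ^ a)
      ≤ ∫ τ in Set.Ioo (0:ℝ) T', g τ := by
    apply integral_mono_of_nonneg
    · refine (ae_restrict_iff' measurableSet_Ioo).mpr (Filter.Eventually.of_forall ?_)
      intro τ hτ
      exact div_nonneg (sBeta_nonneg' hβ hτ.1) (Real.rpow_nonneg (by linarith [hτ.2]) _)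
    · exact hgint
    · exact (ae_restrict_iff' measurableSet_Ioo).mpr (Filter.Eventually.of_forall hpt)
  -- value of integral of g
  have hdisjT : Disjoint (Set.Ioc (0:ℝ) (T' / 2)) (Set.Ioo (T' / 2) T') :=
    Set.disjoint_left.mpr fun x hx hx' => absurd hx'.1 (not_lt.mpr hx.2)
  have hgval : ∫ τ in Set.Ioo (0:ℝ) T', g τ
      = (∫ τ in Set.Ioc 0 (T' / 2), g τ) + ∫ τ in Set.Ioo (T' / 2) T', g τ := by
    rw [hsplitT, setIntegral_union hdisjT measurableSet_Ioo hgint1 hgint2]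
  -- bound first piece
  have hI1 : ∫ τ in Set.Ioc (0:ℝ) (T' / 2), g τ
      ≤ (T' / 2) ^ (-a) * C₂ * ((1 + 2 * K₂) / L) := by
    rw [setIntegral_congr_fun measurableSet_Ioc hgcongr1, integral_const_mul,
      integral_const_mul]
    calc (T' / 2) ^ (-a) * (C₂ * ∫ τ in Set.Ioc (0:ℝ) (T' / 2), bnd τ)
        ≤ (T' / 2) ^ (-a) * (C₂ * ((1 + 2 * K₂) / L)) := by
          apply mul_le_mul_of_nonneg_left _ hX0.le
          exact mul_le_mul_of_nonneg_left hbnd_val hC₂0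
    _ = (T' / 2) ^ (-a) * C₂ * ((1 + 2 * K₂) / L) := by ring
  -- value of second piece
  have hrval : ∫ τ in Set.Ioo (T' / 2) T', (T' - τ) ^ (-a)
      = (T' / 2) ^ (-a + 1) / (-a + 1) := by
    rw [← integral_Ioc_eq_integral_Ioo, ← intervalIntegral.integral_of_le (by linarith)]
    have := intervalIntegral.integral_comp_sub_left (fun x : ℝ => x ^ (-a)) T'
      (a := T' / 2) (b := T')
    rw [this, sub_self, show T' - T' / 2 = T' / 2 by ring,
      integral_rpow (Or.inl (by linarith)), Real.zero_rpow (by linarith)]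
    ring
  have hI2 : ∫ τ in Set.Ioo (T' / 2) T', g τ
      ≤ (T' / 2) ^ (-a) * (C₂ * (1 + T / 2 * Real.exp 2) / (1 - a)) / L := by
    rw [setIntegral_congr_fun measurableSet_Ioo hgcongr2, integral_const_mul, hrval]
    have hXsplit : (T' / 2) ^ (-a + 1) = (T' / 2) ^ (-a) * (T' / 2) := by
      rw [Real.rpow_add (by linarith), Real.rpow_one]
    rw [hXsplit]
    have hkey : T' / 2 ≤ m * (1 + T / 2 * Real.exp 2) := by
      rcases le_or_gt (T' / 2) e2 with hc | hc
      · rw [hm, min_eq_left hc]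
        nlinarith [mul_nonneg (show (0:ℝ) ≤ T' / 2 by linarith)
          (mul_nonneg (show (0:ℝ) ≤ T / 2 by linarith) (Real.exp_pos 2).le)]
      · rw [hm, min_eq_right hc.le]
        have hprod : e2 * Real.exp 2 = 1 := by
          rw [he2, ← Real.exp_add]; norm_num
        nlinarith [he2pos, show T' / 2 ≤ T / 2 by linarith]
    have hfrac : (T' / 2) / (m * L ^ 2) ≤ (1 + T / 2 * Real.exp 2) / L := by
      rw [div_le_div_iff₀ hmL0 hL0]
      have h1 : T' / 2 * L ≤ m * (1 + T / 2 * Real.exp 2) * L :=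
        mul_le_mul_of_nonneg_right hkey hL0.le
      have h2 : m * (1 + T / 2 * Real.exp 2) * L ≤ (1 + T / 2 * Real.exp 2) * (m * L ^ 2) := by
        have hKp : (0:ℝ) ≤ 1 + T / 2 * Real.exp 2 := by positivity
        nlinarith [mul_nonneg (mul_nonneg (mul_nonneg hKp hm0.le) hL0.le)
          (show (0:ℝ) ≤ L - 1 by linarith)]
      linarith
    calc C₂ * (m * L ^ 2)⁻¹ * ((T' / 2) ^ (-a) * (T' / 2) / (-a + 1))
        = (C₂ * (T' / 2) ^ (-a) / (-a + 1)) * ((T' / 2) / (m * L ^ 2)) := by ring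
    _ ≤ (C₂ * (T' / 2) ^ (-a) / (-a + 1)) * ((1 + T / 2 * Real.exp 2) / L) := by
        apply mul_le_mul_of_nonneg_left hfrac
        exact div_nonneg (mul_nonneg hC₂0 hX0.le) (by linarith)
    _ = (T' / 2) ^ (-a) * (C₂ * (1 + T / 2 * Real.exp 2) / (1 - a)) / L := by
        rw [show -a + 1 = 1 - a by ring]; ring
  -- combine
  have hRHS : (max Cmain 1) / ((T' / 2) ^ a * L)
      = (T' / 2) ^ (-a) * (max Cmain 1) / L := by
    rw [Real.rpow_neg (by linarith : (0:ℝ) ≤ T' / 2)]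
    field_simp
  rw [hRHS]
  calc (∫ τ in Set.Ioo (0:ℝ) T', sBeta β τ / (T' - τ) ^ a)
      ≤ ∫ τ in Set.Ioo (0:ℝ) T', g τ := hcomp
  _ = (∫ τ in Set.Ioc 0 (T' / 2), g τ) + ∫ τ in Set.Ioo (T' / 2) T', g τ := hgval
  _ ≤ (T' / 2) ^ (-a) * C₂ * ((1 + 2 * K₂) / L)
      + (T' / 2) ^ (-a) * (C₂ * (1 + T / 2 * Real.exp 2) / (1 - a)) / L :=
        add_le_add hI1 hI2
  _ = (T' / 2) ^ (-a) * Cmain / L := by rw [hCmain]; ring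
  _ ≤ (T' / 2) ^ (-a) * (max Cmain 1) / L := by
      exact (div_le_div_iff_of_pos_right hL0).mpr (mul_le_mul_of_nonneg_left (le_max_left _ _) hX0.le)
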